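/- Let k ≥ 2 circles C₁,…,C_k of circumference 2π all share a common arc α, and suppose the intersection in the quotient L of any subcollection of at least two of the circles is a proper connected arc of each circle (containing α). Then the union L₀ = ⋃_{i≠j} (C_i ∩ C_j) is simply connected. -/

import Mathlib

open Real Set MeasureTheory
open Real Set

lemma helly {ι : Type*} (s : Finset ι) (hs : s.Nonempty) (V : ι → Set ℝ)
    (h1 : ∀ i ∈ s, (V i).OrdConnected)
    (h2 : ∀ i ∈ s, ∀ j ∈ s, (V i ∩ V j).Nonempty) :
    (⋂ i ∈ s, V i).Nonempty := by
  classical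
  induction s using Finset.induction with
  | empty => exact absurd hs (by simp)
  | @insert a s ha ih =>
    rcases s.eq_empty_or_nonempty with rfl | hsne
    · simpa using h2 a (by simp) a (by simp)
    · obtain ⟨t, ht⟩ := ih hsne (fun i hi => h1 i (by simp [hi]))
        (fun i hi j hj => h2 i (by simp [hi]) j (by simp [hj]))
      simp only [Set.mem_iInter] at ht
      by_cases hta : t ∈ V a
      · refine ⟨t, ?_⟩
        simp only [Set.mem_iInter, Finset.mem_insert]
        rintro i (rfl | hi)
        · exact hta
        · exact ht i hi
      · have hw : ∀ i, ∃ wi, i ∈ s → wi ∈ V a ∩ V i := by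
          intro i
          by_cases hi : i ∈ s
          · obtain ⟨wi, hwi⟩ := h2 a (by simp) i (by simp [hi])
            exact ⟨wi, fun _ => hwi⟩
          · exact ⟨0, fun h => absurd h hi⟩
        choose w hwmem using hw
        have hside : (∀ i ∈ s, w i ≤ t) ∨ (∀ i ∈ s, t ≤ w i) := by
          by_contra hcon
          push_neg at hcon
          obtain ⟨⟨i, hi, hit⟩, ⟨j, hj, hjt⟩⟩ := hcon
          exact hta (((h1 a (by simp)).out (hwmem j hj).1 (hwmem i hi).1)
            ⟨le_of_lt hjt, le_of_lt hit⟩)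
        rcases hside with hL | hR
        · obtain ⟨i1, hi1, hmax⟩ := s.exists_max_image w hsne
          refine ⟨w i1, ?_⟩
          simp only [Set.mem_iInter, Finset.mem_insert]
          rintro i (rfl | hi)
          · exact (hwmem i1 hi1).1
          · exact (h1 i (by simp [hi])).out (hwmem i hi).2 (ht i hi) ⟨hmax i hi, hL i1 hi1⟩
        · obtain ⟨i1, hi1, hmin⟩ := s.exists_min_image w hsne
          refine ⟨w i1, ?_⟩
          simp only [Set.mem_iInter, Finset.mem_insert]
          rintro i (rfl | hi)
          · exact (hwmem i1 hi1).1
          · exact (h1 i (by simp [hi])).out (ht i hi) (hwmem i hi).2 ⟨hR i1 hi1, hmin i hi⟩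

noncomputable def G : ℝ → Circle := fun t => AddCircle.homeomorphCircle' (t : AddCircle (2*Real.pi))

lemma G_continuous : Continuous G :=
  AddCircle.homeomorphCircle'.continuous.comp (AddCircle.continuous_mk' _)

lemma G_periodic (s : ℝ) : G (s + 2*Real.pi) = G s := by
  unfold G; rw [AddCircle.coe_add_period]

lemma G_surjective : Function.Surjective G :=
  AddCircle.homeomorphCircle'.surjective.comp Quotient.mk''_surjective

lemma G_exists_Icc (x : Circle) (s : ℝ) : ∃ t ∈ Ico s (s + 2*Real.pi), G t = x := by
  have hp : 0 < 2*Real.pi := by positivity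
  obtain ⟨t0, ht0⟩ := G_surjective x
  have key : ((toIcoMod hp s t0 : ℝ) : AddCircle (2*Real.pi)) = (t0 : AddCircle (2*Real.pi)) := by
    rw [QuotientAddGroup.eq]
    refine AddSubgroup.mem_zmultiples_iff.2 ⟨toIcoDiv hp s t0, ?_⟩
    rw [← self_sub_toIcoMod hp s t0]
    ring
  refine ⟨toIcoMod hp s t0, toIcoMod_mem_Ico hp s t0, ?_⟩
  rw [← ht0]
  show AddCircle.homeomorphCircle' _ = AddCircle.homeomorphCircle' _
  rw [key]

lemma exists_chart (q : Circle) : ∃ (s : ℝ)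
    (d : (Ioo s (s + 2*Real.pi) : Set ℝ) ≃ₜ ({q}ᶜ : Set Circle)),
    (∀ t, (d t : Circle) = G t.1) ∧ G s = q := by
  haveI : Fact (0 < 2*Real.pi) := ⟨by positivity⟩
  obtain ⟨s', hs'⟩ : ∃ s' : AddCircle (2*Real.pi), AddCircle.homeomorphCircle' s' = q :=
    AddCircle.homeomorphCircle'.surjective q
  obtain ⟨s, hs⟩ : ∃ s : ℝ, (s : AddCircle (2*Real.pi)) = s' := Quotient.mk''_surjective s'
  set ρ := AddCircle.homeomorphCircle'
  have hGs : G s = q := by rw [← hs'] ; unfold G; rw [hs]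
  have himg : ρ '' ({((s:ℝ) : AddCircle (2*Real.pi))}ᶜ) = {q}ᶜ := by
    rw [Set.image_compl_eq ρ.bijective, Set.image_singleton]
    congr 1
    rw [← hGs]; rfl
  let e1 := (AddCircle.openPartialHomeomorphCoe (2*Real.pi) s).toHomeomorphSourceTarget
  let e2 := ρ.image ({((s:ℝ) : AddCircle (2*Real.pi))}ᶜ)
  let e3 := Homeomorph.setCongr himg
  exact ⟨s, (e1.trans (e2.trans e3)), fun t => rfl, hGs⟩

section Chart

variable {q : Circle} {s : ℝ} (d : (Ioo s (s + 2*Real.pi) : Set ℝ) ≃ₜ ({q}ᶜ : Set Circle))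
  (hd : ∀ t, (d t : Circle) = G t.1)

include hd

lemma G_symm_apply (z : ({q}ᶜ : Set Circle)) : G ((d.symm z : (Ioo s (s + 2*Real.pi) : Set ℝ)) : ℝ) = z := by
  rw [← hd (d.symm z), d.apply_symm_apply]

lemma slice_eq {W : Set Circle} (hW : W ⊆ {q}ᶜ) :
    {t ∈ Ioo s (s + 2*Real.pi) | G t ∈ W} =
      (fun z => ((d.symm z : (Ioo s (s + 2*Real.pi) : Set ℝ)) : ℝ)) ''
        (Subtype.val ⁻¹' W : Set ({q}ᶜ : Set Circle)) := by
  ext t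
  constructor
  · rintro ⟨ht, hGt⟩
    refine ⟨⟨G t, hW hGt⟩, hGt, ?_⟩
    have : d ⟨t, ht⟩ = ⟨G t, hW hGt⟩ := Subtype.ext (hd ⟨t, ht⟩)
    rw [← this]
    simp
  · rintro ⟨z, hz, rfl⟩
    exact ⟨(d.symm z).2, by rw [G_symm_apply d hd]; exact hz⟩

lemma slice_isCompact {W : Set Circle} (hW : W ⊆ {q}ᶜ) (hWc : IsCompact W) :
    IsCompact {t ∈ Ioo s (s + 2*Real.pi) | G t ∈ W} := by
  rw [slice_eq d hd hW]
  have h1 : IsCompact (Subtype.val ⁻¹' W : Set ({q}ᶜ : Set Circle)) := by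
    rw [Topology.IsEmbedding.subtypeVal.isCompact_iff]
    rwa [Set.image_preimage_eq_of_subset (by rwa [Subtype.range_coe])]
  exact h1.image (continuous_subtype_val.comp d.symm.continuous)

lemma slice_isPreconnected {W : Set Circle} (hW : W ⊆ {q}ᶜ) (hWc : IsPreconnected W) :
    IsPreconnected {t ∈ Ioo s (s + 2*Real.pi) | G t ∈ W} := by
  rw [slice_eq d hd hW]
  have h1 : IsPreconnected (Subtype.val ⁻¹' W : Set ({q}ᶜ : Set Circle)) := by
    rw [← Topology.IsInducing.subtypeVal.isPreconnected_image]
    rwa [Set.image_preimage_eq_of_subset (by rwa [Subtype.range_coe])]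
  exact h1.image _ (continuous_subtype_val.comp d.symm.continuous).continuousOn

lemma slice_nonempty {W : Set Circle} (hW : W ⊆ {q}ᶜ) (hWne : W.Nonempty) :
    {t ∈ Ioo s (s + 2*Real.pi) | G t ∈ W}.Nonempty := by
  obtain ⟨x, hx⟩ := hWne
  exact ⟨_, (d.symm ⟨x, hW hx⟩).2, by rw [G_symm_apply d hd]; exact hx⟩

end Chart

lemma circle_univ_preconnected : IsPreconnected (univ : Set Circle) := by
  have : (univ : Set Circle) = Set.range G := (Set.range_eq_univ.2 G_surjective).symm
  rw [this, ← Set.image_univ]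
  exact isPreconnected_univ.image G G_continuous.continuousOn

/-- complement of a proper closed preconnected subset of the circle is preconnected -/
lemma compl_preconnected {K : Set Circle} (hcl : IsClosed K) (hco : IsPreconnected K)
    (hne : K ≠ univ) : IsPreconnected Kᶜ := by
  rcases K.eq_empty_or_nonempty with rfl | hKne
  · simpa using circle_univ_preconnected
  obtain ⟨q, hq⟩ : ∃ q, q ∉ K := by
    by_contra h; push_neg at h; exact hne (eq_univ_of_forall h)
  obtain ⟨s, d, hd, hGs⟩ := exists_chart q
  have hWq : K ⊆ {q}ᶜ := fun x hx => by
    simp only [mem_compl_iff, mem_singleton_iff]; rintro rfl; exact hq hx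
  set J := {t ∈ Ioo s (s + 2*Real.pi) | G t ∈ K} with hJdef
  have hJco : IsCompact J := slice_isCompact d hd hWq (hcl.isCompact)
  have hJne : J.Nonempty := slice_nonempty d hd hWq hKne
  have hJconn : IsConnected J := ⟨hJne, slice_isPreconnected d hd hWq hco⟩
  have hIcc : J = Icc (sInf J) (sSup J) := eq_Icc_of_connected_compact hJconn hJco
  set c := sInf J with hc
  set e := sSup J with he
  have hce : c ≤ e := csInf_le_csSup hJne hJco.bddBelow hJco.bddAbove
  have hcJ : c ∈ J := hIcc ▸ ⟨le_refl _, hce⟩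
  have heJ : e ∈ J := hIcc ▸ ⟨hce, le_refl _⟩
  have hsc : s < c := hcJ.1.1
  have hes : e < s + 2*Real.pi := heJ.1.2
  have hcompl : Kᶜ = G '' (Ico s c) ∪ G '' (Ioc e (s + 2*Real.pi)) := by
    ext x
    constructor
    · intro hx
      obtain ⟨t, ht, rfl⟩ := G_exists_Icc x s
      rcases eq_or_lt_of_le ht.1 with heq | hst
      · exact Or.inl ⟨t, ⟨heq.le, heq ▸ hsc⟩, rfl⟩
      · have htJ : t ∉ J := fun h => hx h.2
        have : t < c ∨ e < t := by
          by_contra hcon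
          push_neg at hcon
          exact htJ (hIcc ▸ ⟨hcon.1, hcon.2⟩)
        rcases this with h1 | h1
        · exact Or.inl ⟨t, ⟨le_of_lt hst, h1⟩, rfl⟩
        · exact Or.inr ⟨t, ⟨h1, le_of_lt ht.2⟩, rfl⟩
    · rintro (⟨t, ht, rfl⟩ | ⟨t, ht, rfl⟩) <;> intro hxK
      · rcases eq_or_lt_of_le ht.1 with rfl | hst
        · rw [hGs] at hxK; exact hq hxK
        · have : t ∈ J := ⟨⟨hst, lt_trans ht.2 (lt_of_le_of_lt hce hes)⟩, hxK⟩
          exact absurd (hIcc ▸ this : t ∈ Icc c e).1 (not_le.2 ht.2)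
      · rcases eq_or_lt_of_le ht.2 with heq | hst
        · rw [heq, G_periodic, hGs] at hxK; exact hq hxK
        · have : t ∈ J := ⟨⟨lt_of_le_of_lt (le_trans hcJ.1.1.le hce) ht.1, hst⟩, hxK⟩
          exact absurd (hIcc ▸ this : t ∈ Icc c e).2 (not_le.2 ht.1)
  rw [hcompl]
  refine IsPreconnected.union q ⟨s, ⟨le_refl _, hsc⟩, hGs⟩
    ⟨s + 2*Real.pi, ⟨hes, le_refl _⟩, by rw [G_periodic, hGs]⟩
    (isPreconnected_Ico.image G G_continuous.continuousOn)
    (isPreconnected_Ioc.image G G_continuous.continuousOn)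
open Set unitInterval

lemma continuous_of_closed_cover {X Y : Type*} [TopologicalSpace X] [TopologicalSpace Y]
    {f : X → Y} {s t : Set X} (hs : IsClosed s) (ht : IsClosed t) (hcov : s ∪ t = univ)
    (hfs : ContinuousOn f s) (hft : ContinuousOn f t) : Continuous f := by
  rw [continuous_iff_isClosed]
  intro C hC
  have : f ⁻¹' C = (s ∩ f ⁻¹' C) ∪ (t ∩ f ⁻¹' C) := by
    rw [← union_inter_distrib_right, hcov, univ_inter]
  rw [this]
  exact (hfs.preimage_isClosed_of_isClosed hs hC).union (hft.preimage_isClosed_of_isClosed ht hC)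

/-- If `Z` deformation-retracts (rel `W`) onto a contractible subset `W`, then `Z` is
contractible. -/
lemma contractible_of_deformation {L : Type*} [TopologicalSpace L] {Z W : Set L}
    (hle : W ⊆ Z) (H : C(↥Z × I, ↥Z))
    (h0 : ∀ z, H (z, 0) = z)
    (h1 : ∀ z, (H (z, 1) : L) ∈ W)
    (hW : ∀ (z : ↥Z) (t : I), (z : L) ∈ W → H (z, t) = z)
    [ContractibleSpace ↥W] : ContractibleSpace ↥Z := by
  let f : C(↥W, ↥Z) := ⟨fun w => ⟨w, hle w.2⟩, by fun_prop⟩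
  let g : C(↥Z, ↥W) := ⟨fun z => ⟨H (z, 1), h1 z⟩, by fun_prop⟩
  have hfg : (f.comp g).Homotopic (ContinuousMap.id ↥Z) := by
    refine ⟨⟨⟨fun p => H (p.2, σ p.1), by fun_prop⟩, ?_, ?_⟩⟩
    · intro z
      simp [f, g]
    · intro z
      simp [h0 z]
  have hgf : g.comp f = ContinuousMap.id ↥W := by
    ext w
    have := hW ⟨w, hle w.2⟩ 1 w.2
    simp [f, g, this]
  have e : ContinuousMap.HomotopyEquiv ↥Z ↥W :=
    { toFun := g
      invFun := f
      left_inv := hfg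
      right_inv := by rw [hgf] }
  exact e.contractibleSpace

section KTransfer

variable {L : Type*} [TopologicalSpace L] {Cs : Set L} (h : ↥Cs ≃ₜ Circle)

/-- the image in the abstract circle of a subset `A ⊆ Cs`. -/
def KofA (h : ↥Cs ≃ₜ Circle) (A : Set L) : Set Circle := h '' (Subtype.val ⁻¹' A)

lemma KofA_mem {A : Set L} {x : L} (hx : x ∈ A) (hxC : x ∈ Cs) : h ⟨x, hxC⟩ ∈ KofA h A :=
  ⟨⟨x, hxC⟩, hx, rfl⟩

lemma KofA_mem_iff {A : Set L} {x : L} (hxC : x ∈ Cs) : h ⟨x, hxC⟩ ∈ KofA h A ↔ x ∈ A := by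
  refine ⟨?_, fun hx => KofA_mem h hx hxC⟩
  rintro ⟨z, hz, heq⟩
  have : z = ⟨x, hxC⟩ := h.injective heq
  rw [this] at hz
  exact hz

lemma KofA_symm_mem {A : Set L} {w : Circle} (hw : w ∈ KofA h A) : ((h.symm w : ↥Cs) : L) ∈ A := by
  obtain ⟨z, hz, rfl⟩ := hw
  rw [h.symm_apply_apply]
  exact hz

lemma KofA_isCompact {A : Set L} (hA : IsClosed A) : IsCompact (KofA h A) := by
  haveI : CompactSpace ↥Cs := h.symm.compactSpace
  exact ((hA.preimage continuous_subtype_val).isCompact).image h.continuous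

lemma KofA_isPreconnected {A : Set L} (hA : IsPreconnected A) (hAC : A ⊆ Cs) :
    IsPreconnected (KofA h A) := by
  have h1 : IsPreconnected (Subtype.val ⁻¹' A : Set ↥Cs) := by
    rw [← Topology.IsInducing.subtypeVal.isPreconnected_image]
    rwa [Set.image_preimage_eq_of_subset (by rwa [Subtype.range_coe])]
  exact h1.image _ h.continuous.continuousOn

lemma KofA_ne_univ {A : Set L} (hA : A ⊂ Cs) : KofA h A ≠ univ := by
  obtain ⟨x, hxC, hxA⟩ := exists_of_ssubset hA
  intro hu
  exact hxA ((KofA_mem_iff h hxC).1 (hu ▸ mem_univ _))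

lemma KofA_inter (A B : Set L) : KofA h (A ∩ B) = KofA h A ∩ KofA h B := by
  unfold KofA
  rw [preimage_inter, Set.image_inter h.injective]

lemma KofA_mono {A B : Set L} (hAB : A ⊆ B) : KofA h A ⊆ KofA h B :=
  image_mono (preimage_mono hAB)

end KTransfer

lemma preconn_aux {L : Type*} [TopologicalSpace L] {ι : Type*} (p : L) (cond : ι → Prop)
    (s : ι → Set L) (hmem : ∀ i, cond i → p ∈ s i)
    (hconn : ∀ i, cond i → IsPreconnected (s i)) :
    IsPreconnected (⋃ i, ⋃ (_ : cond i), s i) := by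
  have he : (⋃ i, ⋃ (_ : cond i), s i) = ⋃₀ {t | ∃ i, cond i ∧ t = s i} := by
    ext x
    simp only [mem_iUnion, mem_sUnion, mem_setOf_eq]
    constructor
    · rintro ⟨i, hi, hx⟩; exact ⟨s i, ⟨i, hi, rfl⟩, hx⟩
    · rintro ⟨t, ⟨i, hi, rfl⟩, hx⟩; exact ⟨i, hi, hx⟩
  rw [he]
  exact isPreconnected_sUnion p _ (by rintro t ⟨i, hi, rfl⟩; exact hmem i hi)
    (by rintro t ⟨i, hi, rfl⟩; exact hconn i hi)


open MeasureTheory unitInterval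

/-- Let `k ≥ 2` circles `C₁, …, C_k` of circumference `2π` inside a quotient
metric graph `L` all share a common (nonempty) arc `α`, and suppose the
intersection of any subcollection of at least two of the circles is a proper
connected arc of each circle containing `α` — in particular contractible.
Then `L₀ = ⋃_{i≠j} (C_i ∩ C_j)` is simply connected. -/
theorem stmt_17 {L : Type*} [MetricSpace L] [MeasurableSpace L] [BorelSpace L]
    (k : ℕ) (hk : 2 ≤ k) (C : Fin k → Set L) (α : Set L)
    (hCcirc : ∀ i, Nonempty (↥(C i) ≃ₜ Circle))
    (hClen : ∀ i, μH[1] (C i) = ENNReal.ofReal (2 * π))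
    (hCclosed : ∀ i, IsClosed (C i))
    (hαne : α.Nonempty) (hαsub : ∀ i, α ⊆ C i)
    (hint : ∀ T : Finset (Fin k), 2 ≤ T.card →
      IsConnected (⋂ i ∈ T, C i) ∧ (∀ i ∈ T, (⋂ j ∈ T, C j) ⊂ C i) ∧
        ContractibleSpace ↥(⋂ i ∈ T, C i)) :
    SimplyConnectedSpace ↥(⋃ i, ⋃ j, ⋃ _ : i ≠ j, C i ∩ C j) := by

  classical
  obtain ⟨p, hpα⟩ := hαne
  have hpC : ∀ i, p ∈ C i := fun i => hαsub i hpα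
  have hpair : ∀ i j : Fin k, i ≠ j →
      IsPreconnected (C i ∩ C j) ∧ (C i ∩ C j ⊂ C j) ∧ ContractibleSpace ↥(C i ∩ C j) := by
    intro i j hij
    obtain ⟨h1, h2, h3⟩ := hint {i, j} (by rw [Finset.card_pair hij])
    have hEq : (⋂ l ∈ ({i, j} : Finset (Fin k)), C l) = C i ∩ C j := by simp
    rw [hEq] at h1 h3
    refine ⟨h1.2, ?_, h3⟩
    have h4 := h2 j (by simp)
    rwa [hEq] at h4
  have htriple : ∀ i j l : Fin k, i ≠ j → i ≠ l → j ≠ l →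
      IsPreconnected (C i ∩ C j ∩ C l) := by
    intro i j l hij hil hjl
    obtain ⟨h1, -, -⟩ := hint {i, j, l} (by
      rw [Finset.card_insert_of_notMem (by simp [hij, hil]), Finset.card_pair hjl]; omega)
    have hEq : (⋂ a ∈ ({i, j, l} : Finset (Fin k)), C a) = C i ∩ C j ∩ C l := by
      simp [inter_assoc]
    rw [hEq] at h1
    exact h1.2
  set Xm : ℕ → Set L := fun m =>
    ⋃ (ij : Fin k × Fin k), ⋃ (_ : ij.1 ≠ ij.2 ∧ ij.1.val < m ∧ ij.2.val < m), C ij.1 ∩ C ij.2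
    with hXmdef
  have hXmem : ∀ (m : ℕ) (x : L), x ∈ Xm m ↔
      ∃ i j : Fin k, i ≠ j ∧ i.val < m ∧ j.val < m ∧ x ∈ C i ∩ C j := by
    intro m x
    simp only [hXmdef, mem_iUnion, Prod.exists]
    constructor
    · rintro ⟨i, j, ⟨hij, hi, hj⟩, hx⟩; exact ⟨i, j, hij, hi, hj, hx⟩
    · rintro ⟨i, j, hij, hi, hj, hx⟩; exact ⟨i, j, ⟨hij, hi, hj⟩, hx⟩
  have hXcl : ∀ m, IsClosed (Xm m) := fun m =>
    isClosed_iUnion_of_finite fun ij => isClosed_iUnion_of_finite fun _ =>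
      (hCclosed ij.1).inter (hCclosed ij.2)
  have h0k : 0 < k := by omega
  have h1k : 1 < k := by omega
  set i0 : Fin k := ⟨0, h0k⟩ with hi0
  set i1 : Fin k := ⟨1, h1k⟩ with hi1
  have hne01 : i0 ≠ i1 := by
    intro hEq
    have := congrArg Fin.val hEq
    simp [hi0, hi1] at this
  have main : ∀ m, 2 ≤ m → m ≤ k → ContractibleSpace ↥(Xm m) := by
    intro m hm
    induction m, hm using Nat.le_induction with
    | base =>
      intro _
      have hX2 : Xm 2 = C i0 ∩ C i1 := by
        ext x
        rw [hXmem]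
        constructor
        · rintro ⟨i, j, hij, hi, hj, hx⟩
          have hvne : i.val ≠ j.val := fun hv => hij (Fin.ext hv)
          rcases (by omega : (i.val = 0 ∧ j.val = 1) ∨ (i.val = 1 ∧ j.val = 0)) with h | h
          · have : i = i0 := Fin.ext (by simp [hi0, h.1])
            have h2 : j = i1 := Fin.ext (by simp [hi1, h.2])
            rw [this, h2] at hx
            exact hx
          · have : i = i1 := Fin.ext (by simp [hi1, h.1])
            have h2 : j = i0 := Fin.ext (by simp [hi0, h.2])
            rw [this, h2] at hx
            exact ⟨hx.2, hx.1⟩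
        · intro hx
          exact ⟨i0, i1, hne01, by simp [hi0], by simp [hi1], hx⟩
      rw [hX2]
      exact (hpair i0 i1 hne01).2.2
    | succ m hm2 ih =>
      intro hmk1
      haveI IH : ContractibleSpace ↥(Xm m) := ih (by omega)
      set idx : Fin k := ⟨m, by omega⟩ with hidx
      have hidxne : ∀ i : Fin k, i.val < m → i ≠ idx := by
        intro i hi hEq
        have := congrArg Fin.val hEq
        simp only [hidx] at this
        omega
      set B' : Set L := ⋃ (i : Fin k), ⋃ (_ : i.val < m), C i ∩ C idx with hB'def
      set Z : Set L := ⋃ (ij : Fin k × Fin k),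
        ⋃ (_ : ij.1 ≠ ij.2 ∧ ij.1.val < m ∧ ij.2.val < m), C ij.1 ∩ C ij.2 ∩ C idx with hZdef
      have hB'mem : ∀ x : L, x ∈ B' ↔ ∃ i : Fin k, i.val < m ∧ x ∈ C i ∩ C idx := by
        intro x; simp only [hB'def, mem_iUnion, exists_prop]
      have hZmem : ∀ x : L, x ∈ Z ↔
          ∃ i j : Fin k, i ≠ j ∧ i.val < m ∧ j.val < m ∧ x ∈ C i ∩ C j ∩ C idx := by
        intro x
        simp only [hZdef, mem_iUnion, Prod.exists]
        constructor
        · rintro ⟨i, j, ⟨hij, hi, hj⟩, hx⟩; exact ⟨i, j, hij, hi, hj, hx⟩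
        · rintro ⟨i, j, hij, hi, hj, hx⟩; exact ⟨i, j, ⟨hij, hi, hj⟩, hx⟩
      have hB'subC : B' ⊆ C idx := by
        intro x hx; obtain ⟨i, -, -, hx2⟩ := (hB'mem x).1 hx; exact hx2
      have hZsubB' : Z ⊆ B' := by
        intro x hx
        obtain ⟨i, j, -, hi, -, hx2⟩ := (hZmem x).1 hx
        exact (hB'mem x).2 ⟨i, hi, hx2.1.1, hx2.2⟩
      have hZsubX : Z ⊆ Xm m := by
        intro x hx
        obtain ⟨i, j, hij, hi, hj, hx2⟩ := (hZmem x).1 hx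
        exact (hXmem m x).2 ⟨i, j, hij, hi, hj, hx2.1⟩
      have hXsucc : Xm (m+1) = Xm m ∪ B' := by
        ext x
        rw [hXmem, mem_union, hXmem, hB'mem]
        constructor
        · rintro ⟨i, j, hij, hi, hj, hx⟩
          rcases (by omega : (i.val < m ∧ j.val < m) ∨ i.val = m ∨ j.val = m) with h | h | h
          · exact Or.inl ⟨i, j, hij, h.1, h.2, hx⟩
          · have hieq : i = idx := Fin.ext (by simp [hidx, h])
            have hjm : j.val < m := by
              rcases (by omega : j.val < m ∨ j.val = m) with h2 | h2
              · exact h2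
              · exact absurd (Fin.ext (by simp [hidx, h, h2] : i.val = j.val)) hij
            exact Or.inr ⟨j, hjm, hx.2, hieq ▸ hx.1⟩
          · have hjeq : j = idx := Fin.ext (by simp [hidx, h])
            have him : i.val < m := by
              rcases (by omega : i.val < m ∨ i.val = m) with h2 | h2
              · exact h2
              · exact absurd (Fin.ext (by simp [hidx, h, h2] : i.val = j.val)) hij
            exact Or.inr ⟨i, him, hx.1, hjeq ▸ hx.2⟩
        · rintro (⟨i, j, hij, hi, hj, hx⟩ | ⟨i, hi, hx⟩)
          · exact ⟨i, j, hij, by omega, by omega, hx⟩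
          · exact ⟨i, idx, hidxne i hi, by omega, by simp [hidx], hx⟩
      have hZeq : Xm m ∩ B' = Z := by
        ext x
        constructor
        · rintro ⟨hx1, hx2⟩
          obtain ⟨i, j, hij, hi, hj, hx⟩ := (hXmem m x).1 hx1
          obtain ⟨l, hl, hxl⟩ := (hB'mem x).1 hx2
          exact (hZmem x).2 ⟨i, j, hij, hi, hj, hx, hxl.2⟩
        · intro hx
          exact ⟨hZsubX hx, hZsubB' hx⟩
      have hB'cl : IsClosed B' := isClosed_iUnion_of_finite fun i =>
        isClosed_iUnion_of_finite fun _ => (hCclosed i).inter (hCclosed idx)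
      have hZcl : IsClosed Z := isClosed_iUnion_of_finite fun ij =>
        isClosed_iUnion_of_finite fun _ => ((hCclosed ij.1).inter (hCclosed ij.2)).inter
          (hCclosed idx)
      have hB'pre : IsPreconnected B' := by
        rw [hB'def]
        exact preconn_aux p _ _ (fun i _ => ⟨hpC i, hpC idx⟩)
          (fun i hi => (hpair i idx (hidxne i hi)).1)
      have hZpre : IsPreconnected Z := by
        rw [hZdef]
        exact preconn_aux p _ _ (fun ij _ => ⟨⟨hpC ij.1, hpC ij.2⟩, hpC idx⟩)
          (fun ij hij => htriple ij.1 ij.2 idx hij.1 (hidxne ij.1 hij.2.1)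
            (hidxne ij.2 hij.2.2))
      have hi0m : (i0 : Fin k).val < m := by simp only [hi0, Fin.val_mk]; omega
      have hi1m : (i1 : Fin k).val < m := by simp only [hi1, Fin.val_mk]; omega
      have hpB' : p ∈ B' := (hB'mem p).2 ⟨i0, hi0m, hpC i0, hpC idx⟩
      have hpZ : p ∈ Z := (hZmem p).2 ⟨i0, i1, hne01, hi0m, hi1m, ⟨⟨hpC i0, hpC i1⟩, hpC idx⟩⟩
      have hpX : p ∈ Xm m := hZsubX hpZ
      -- move to the circle
      have h := (hCcirc idx).some
      set p₀ : Circle := h ⟨p, hpC idx⟩ with hp₀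
      -- the Helly argument: find a point of the circle avoiding all the arcs C i ∩ C idx
      obtain ⟨s₀, d₀, hd₀, hGs₀⟩ := exists_chart p₀
      set V : Fin k → Set ℝ :=
        fun i => {t ∈ Ioo s₀ (s₀ + 2*Real.pi) | G t ∈ (KofA h (C i ∩ C idx))ᶜ} with hVdef
      have hKicl : ∀ i : Fin k, IsClosed (KofA h (C i ∩ C idx)) := fun i =>
        (KofA_isCompact h ((hCclosed i).inter (hCclosed idx))).isClosed
      have hKipre : ∀ i : Fin k, i.val < m → IsPreconnected (KofA h (C i ∩ C idx)) :=
        fun i hi => KofA_isPreconnected h (hpair i idx (hidxne i hi)).1 inter_subset_right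
      have hKine : ∀ i : Fin k, i.val < m → KofA h (C i ∩ C idx) ≠ univ :=
        fun i hi => KofA_ne_univ h (hpair i idx (hidxne i hi)).2.1
      have hp₀Ki : ∀ i : Fin k, p₀ ∈ KofA h (C i ∩ C idx) ↔ p ∈ C i ∩ C idx := fun i =>
        KofA_mem_iff h (hpC idx)
      have hcomplsub : ∀ i : Fin k, (KofA h (C i ∩ C idx))ᶜ ⊆ ({p₀}ᶜ : Set Circle) := by
        intro i x hx
        simp only [mem_compl_iff, mem_singleton_iff]
        rintro rfl
        exact hx ((hp₀Ki i).2 ⟨hpC i, hpC idx⟩)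
      set sfin : Finset (Fin k) := Finset.univ.filter (fun i : Fin k => i.val < m) with hsfin
      have hsfinmem : ∀ i : Fin k, i ∈ sfin ↔ i.val < m := by
        intro i; simp [hsfin]
      have hVconn : ∀ i ∈ sfin, (V i).OrdConnected := by
        intro i hi
        exact (slice_isPreconnected d₀ hd₀ (hcomplsub i)
          (compl_preconnected (hKicl i) (hKipre i ((hsfinmem i).1 hi))
            (hKine i ((hsfinmem i).1 hi)))).ordConnected
      have hVpairne : ∀ i ∈ sfin, ∀ j ∈ sfin, (V i ∩ V j).Nonempty := by
        intro i hi j hj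
        rw [hsfinmem] at hi hj
        have hVV : V i ∩ V j = {t ∈ Ioo s₀ (s₀ + 2*Real.pi) |
            G t ∈ (KofA h (C i ∩ C idx) ∪ KofA h (C j ∩ C idx))ᶜ} := by
          ext t
          simp only [hVdef, compl_union, mem_inter_iff, mem_setOf_eq, mem_compl_iff]
          tauto
        have hne2 : (KofA h (C i ∩ C idx) ∪ KofA h (C j ∩ C idx))ᶜ.Nonempty := by
          rcases eq_or_ne i j with rfl | hij
          · rw [union_self]
            exact nonempty_compl.2 (hKine i hi)
          · by_contra hcon
            rw [not_nonempty_iff_eq_empty, compl_empty_iff] at hcon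
            have hM : KofA h (C i ∩ C idx) ∩ KofA h (C j ∩ C idx)
                = KofA h (C i ∩ C j ∩ C idx) := by
              have hsets : (C i ∩ C idx) ∩ (C j ∩ C idx) = C i ∩ C j ∩ C idx := by
                ext x
                exact ⟨fun hx => ⟨⟨hx.1.1, hx.2.1⟩, hx.1.2⟩,
                  fun hx => ⟨⟨hx.1.1, hx.2⟩, ⟨hx.1.2, hx.2⟩⟩⟩
              rw [← KofA_inter, hsets]
            have hMpre : IsPreconnected ((KofA h (C i ∩ C j ∩ C idx))ᶜ) := by
              refine compl_preconnected ?_ ?_ ?_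
              · exact (KofA_isCompact h (((hCclosed i).inter (hCclosed j)).inter
                  (hCclosed idx))).isClosed
              · exact KofA_isPreconnected h
                  (htriple i j idx hij (hidxne i hi) (hidxne j hj)) inter_subset_right
              · intro hu
                refine hKine i hi (univ_subset_iff.1 ?_)
                rw [← hu, ← hM]
                exact fun x hx => hx.1
            rw [← hM, compl_inter] at hMpre
            obtain ⟨x1, hx1⟩ := nonempty_compl.2 (hKine i hi)
            obtain ⟨x2, hx2⟩ := nonempty_compl.2 (hKine j hj)
            have hdisj : (KofA h (C i ∩ C idx))ᶜ ∩ (KofA h (C j ∩ C idx))ᶜ = ∅ := by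
              rw [← compl_union, hcon, compl_univ]
            obtain ⟨x, -, hx⟩ := hMpre _ _ (hKicl i).isOpen_compl (hKicl j).isOpen_compl
              (subset_refl _)
              ⟨x1, Or.inl hx1, hx1⟩ ⟨x2, Or.inr hx2, hx2⟩
            rw [hdisj] at hx
            exact hx
        have hsub2 : (KofA h (C i ∩ C idx) ∪ KofA h (C j ∩ C idx))ᶜ ⊆ ({p₀}ᶜ : Set Circle) := by
          intro x hx
          simp only [mem_compl_iff, mem_singleton_iff]
          rintro rfl
          exact hx (Or.inl ((hp₀Ki i).2 ⟨hpC i, hpC idx⟩))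
        rw [hVV]
        exact slice_nonempty d₀ hd₀ hsub2 hne2
      obtain ⟨c, hc⟩ := helly sfin ⟨i0, (hsfinmem i0).2 hi0m⟩ V hVconn hVpairne
      simp only [Set.mem_iInter] at hc
      set q : Circle := G c with hq
      have hqKi : ∀ i : Fin k, i.val < m → q ∉ KofA h (C i ∩ C idx) := by
        intro i hi
        exact (hc i ((hsfinmem i).2 hi)).2
      have hKB : KofA h B' = ⋃ (i : Fin k), ⋃ (_ : i.val < m), KofA h (C i ∩ C idx) := by
        unfold KofA
        rw [hB'def]
        rw [preimage_iUnion, image_iUnion]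
        refine iUnion_congr fun i => ?_
        rw [preimage_iUnion, image_iUnion]
      have hqKB : q ∉ KofA h B' := by
        rw [hKB]
        simp only [mem_iUnion, not_exists]
        exact fun i hi => hqKi i hi
      have hKBq : KofA h B' ⊆ ({q}ᶜ : Set Circle) := by
        intro x hx
        simp only [mem_compl_iff, mem_singleton_iff]
        rintro rfl
        exact hqKB hx
      obtain ⟨s1, d1, hd1, hGs1⟩ := exists_chart q
      set JB : Set ℝ := {t ∈ Ioo s1 (s1 + 2*Real.pi) | G t ∈ KofA h B'} with hJBdef
      set JZ : Set ℝ := {t ∈ Ioo s1 (s1 + 2*Real.pi) | G t ∈ KofA h Z} with hJZdef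
      have hJBco : IsCompact JB := slice_isCompact d1 hd1 hKBq (KofA_isCompact h hB'cl)
      have hJBne : JB.Nonempty :=
        slice_nonempty d1 hd1 hKBq ⟨p₀, hp₀ ▸ KofA_mem h hpB' (hpC idx)⟩
      have hJBpre : IsPreconnected JB :=
        slice_isPreconnected d1 hd1 hKBq (KofA_isPreconnected h hB'pre hB'subC)
      have hJBIcc : JB = Icc (sInf JB) (sSup JB) :=
        eq_Icc_of_connected_compact ⟨hJBne, hJBpre⟩ hJBco
      set u : ℝ := sInf JB with hu
      set v : ℝ := sSup JB with hv
      have hKZq : KofA h Z ⊆ ({q}ᶜ : Set Circle) := subset_trans (KofA_mono h hZsubB') hKBq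
      have hJZco : IsCompact JZ := slice_isCompact d1 hd1 hKZq (KofA_isCompact h hZcl)
      have hJZne : JZ.Nonempty :=
        slice_nonempty d1 hd1 hKZq ⟨p₀, hp₀ ▸ KofA_mem h hpZ (hpC idx)⟩
      have hJZpre : IsPreconnected JZ :=
        slice_isPreconnected d1 hd1 hKZq (KofA_isPreconnected h hZpre
          (subset_trans hZsubB' hB'subC))
      have hJZIcc : JZ = Icc (sInf JZ) (sSup JZ) :=
        eq_Icc_of_connected_compact ⟨hJZne, hJZpre⟩ hJZco
      set a₀ : ℝ := sInf JZ with ha₀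
      set b₀ : ℝ := sSup JZ with hb₀
      have hab : a₀ ≤ b₀ := csInf_le_csSup hJZne hJZco.bddBelow hJZco.bddAbove
      have hJZsubJB : JZ ⊆ JB := fun t ht => ⟨ht.1, KofA_mono h hZsubB' ht.2⟩
      have hIccsub : Icc a₀ b₀ ⊆ Icc u v := by
        intro t ht
        rw [← hJZIcc] at ht
        rw [← hJBIcc]
        exact hJZsubJB ht
      have hua : u ≤ a₀ := (hIccsub (left_mem_Icc.2 hab)).1
      have hbv : b₀ ≤ v := (hIccsub (right_mem_Icc.2 hab)).2
      -- the basic point maps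
      have hBq2 : ∀ (x : L) (hx : x ∈ B'), h ⟨x, hB'subC hx⟩ ∈ ({q}ᶜ : Set Circle) :=
        fun x hx => hKBq (KofA_mem h hx (hB'subC hx))
      set yf : (x : L) → x ∈ B' → ℝ := fun x hx =>
        ((d1.symm ⟨h ⟨x, hB'subC hx⟩, hBq2 x hx⟩ : (Ioo s1 (s1 + 2*Real.pi) : Set ℝ)) : ℝ)
        with hyfdef
      have hGyf : ∀ (x : L) (hx : x ∈ B'), G (yf x hx) = h ⟨x, hB'subC hx⟩ :=
        fun x hx => G_symm_apply d1 hd1 _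
      have hyuv : ∀ (x : L) (hx : x ∈ B'), yf x hx ∈ Icc u v := by
        intro x hx
        rw [← hJBIcc]
        exact ⟨(d1.symm _).2, by rw [hGyf x hx]; exact KofA_mem h hx (hB'subC hx)⟩
      have hyZ : ∀ (x : L) (hx : x ∈ B'), x ∈ Z → yf x hx ∈ Icc a₀ b₀ := by
        intro x hx hxZ
        rw [← hJZIcc]
        exact ⟨(d1.symm _).2, by rw [hGyf x hx]; exact KofA_mem h hxZ (hB'subC hx)⟩
      set cl : ℝ → ℝ := fun y' => max a₀ (min y' b₀) with hcldef
      have hclIcc : ∀ y', cl y' ∈ Icc a₀ b₀ :=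
        fun y' => ⟨le_max_left _ _, max_le hab (min_le_right _ _)⟩
      set wf : ℝ → ℝ → ℝ := fun y' t => (1-t)*y' + t*(cl y') with hwfdef
      have hwIcc : ∀ y' t, y' ∈ Icc u v → t ∈ Icc (0:ℝ) 1 → wf y' t ∈ Icc u v := by
        intro y' t hy ht
        have hcl' : cl y' ∈ Icc u v := ⟨le_trans hua (hclIcc y').1, le_trans (hclIcc y').2 hbv⟩
        have hcomb := (convex_Icc u v) hy hcl' (by linarith [ht.2] : (0:ℝ) ≤ 1 - t) ht.1
          (by ring)
        simpa [hwfdef, smul_eq_mul] using hcomb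
      have hw0 : ∀ y', wf y' 0 = y' := by intro y'; simp only [hwfdef]; ring
      have hw1 : ∀ y', wf y' 1 = cl y' := by intro y'; simp only [hwfdef]; ring
      have hwfix : ∀ y' t, y' ∈ Icc a₀ b₀ → wf y' t = y' := by
        intro y' t hy
        have hcy : cl y' = y' := by
          simp only [hcldef]
          rw [min_eq_left hy.2, max_eq_right hy.1]
        simp only [hwfdef, hcy]
        ring
      set vf : Circle → L := fun ζ => ((h.symm ζ : ↥(C idx)) : L) with hvfdef
      have hvfB : ∀ ζ, ζ ∈ KofA h B' → vf ζ ∈ B' := fun ζ hζ => KofA_symm_mem h hζ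
      have hvfZ : ∀ ζ, ζ ∈ KofA h Z → vf ζ ∈ Z := fun ζ hζ => KofA_symm_mem h hζ
      have hcancel : ∀ (x : L) (hxC : x ∈ C idx), vf (h ⟨x, hxC⟩) = x := by
        intro x hxC
        simp only [hvfdef]
        rw [h.symm_apply_apply]
      set H₀ : ↥(Xm (m+1)) × ↥I → L := fun z =>
        if hz : (z.1 : L) ∈ B' then vf (G (wf (yf (z.1 : L) hz) ((z.2 : ℝ)))) else (z.1 : L)
        with hH₀def
      have hGwKB : ∀ (x : L) (hx : x ∈ B') (t : ℝ), t ∈ Icc (0:ℝ) 1 →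
          G (wf (yf x hx) t) ∈ KofA h B' := by
        intro x hx t ht
        have h1 : wf (yf x hx) t ∈ Icc u v := hwIcc _ _ (hyuv x hx) ht
        rw [← hJBIcc] at h1
        exact h1.2
      have hB'subX : B' ⊆ Xm (m+1) := by rw [hXsucc]; exact subset_union_right
      have hXsub : Xm (m+1) ⊆ Xm m ∪ B' := subset_of_eq hXsucc
      have htotal : ∀ z, H₀ z ∈ Xm (m+1) := by
        intro z
        simp only [hH₀def]
        split_ifs with hz
        · exact hB'subX (hvfB _ (hGwKB (z.1 : L) hz (z.2 : ℝ) ⟨z.2.2.1, z.2.2.2⟩))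
        · exact z.1.2
      have hH1 : ∀ z : ↥(Xm (m+1)), H₀ (z, 1) ∈ Xm m := by
        intro z
        simp only [hH₀def]
        split_ifs with hz
        · have h1 : ((1 : ↥I) : ℝ) = 1 := rfl
          rw [h1, hw1]
          have h2 : cl (yf (z : L) hz) ∈ JZ := by rw [hJZIcc]; exact hclIcc _
          exact hZsubX (hvfZ _ h2.2)
        · exact (hXsub z.2).resolve_right hz
      have hfixX : ∀ (z : ↥(Xm (m+1))) (t : ↥I), (z : L) ∈ Xm m → H₀ (z, t) = (z : L) := by
        intro z t hzX
        simp only [hH₀def]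
        split_ifs with hz
        · have hxZ : (z : L) ∈ Z := hZeq ▸ (⟨hzX, hz⟩ : (z : L) ∈ Xm m ∩ B')
          rw [hwfix _ _ (hyZ (z : L) hz hxZ), hGyf (z : L) hz, hcancel (z : L) (hB'subC hz)]
        · rfl
      have hzero : ∀ z : ↥(Xm (m+1)), H₀ (z, 0) = (z : L) := by
        intro z
        simp only [hH₀def]
        split_ifs with hz
        · rw [show ((0 : ↥I) : ℝ) = 0 from rfl, hw0, hGyf (z : L) hz,
            hcancel (z : L) (hB'subC hz)]
        · rfl
      -- continuity
      set A1 : Set (↥(Xm (m+1)) × ↥I) := {z | (z.1 : L) ∈ Xm m} with hA1def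
      set A2 : Set (↥(Xm (m+1)) × ↥I) := {z | (z.1 : L) ∈ B'} with hA2def
      have hA1cl : IsClosed A1 := (hXcl m).preimage
        (continuous_subtype_val.comp continuous_fst)
      have hA2cl : IsClosed A2 := hB'cl.preimage (continuous_subtype_val.comp continuous_fst)
      have hcov : A1 ∪ A2 = univ := by
        rw [eq_univ_iff_forall]
        intro z
        rcases hXsub z.1.2 with h2 | h2
        · exact Or.inl h2
        · exact Or.inr h2
      have hcont2 : ContinuousOn H₀ A2 := by
        rw [continuousOn_iff_continuous_restrict]
        have hrestr : A2.domRestrict H₀ =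
            fun z' : ↥A2 => vf (G (wf (yf ((z' : ↥(Xm (m+1)) × ↥I).1 : L) z'.2)
              (((z' : ↥(Xm (m+1)) × ↥I).2 : ℝ)))) := by
          funext z'
          simp only [Set.domRestrict_apply, hH₀def]
          rw [dif_pos (show ((z' : ↥(Xm (m+1)) × ↥I).1 : L) ∈ B' from z'.2)]
        rw [hrestr]
        have c1 : Continuous (fun z' : ↥A2 => ((z' : ↥(Xm (m+1)) × ↥I).1 : L)) :=
          continuous_subtype_val.comp (continuous_fst.comp continuous_subtype_val)
        have c2 : Continuous (fun z' : ↥A2 =>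
            yf ((z' : ↥(Xm (m+1)) × ↥I).1 : L) z'.2) := by
          simp only [hyfdef]
          exact continuous_subtype_val.comp (d1.symm.continuous.comp
            ((h.continuous.comp (c1.subtype_mk _)).subtype_mk _))
        have c3 : Continuous (fun z' : ↥A2 => (((z' : ↥(Xm (m+1)) × ↥I).2 : ℝ))) :=
          continuous_subtype_val.comp (continuous_snd.comp continuous_subtype_val)
        have c4 : Continuous (fun z' : ↥A2 =>
            wf (yf ((z' : ↥(Xm (m+1)) × ↥I).1 : L) z'.2)
              (((z' : ↥(Xm (m+1)) × ↥I).2 : ℝ))) := by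
          simp only [hwfdef, hcldef]
          exact ((continuous_const.sub c3).mul c2).add
            (c3.mul (Continuous.max continuous_const (Continuous.min c2 continuous_const)))
        simp only [hvfdef]
        exact continuous_subtype_val.comp (h.symm.continuous.comp (G_continuous.comp c4))
      have hcont1 : ContinuousOn H₀ A1 := by
        have hbase : ContinuousOn (fun z : ↥(Xm (m+1)) × ↥I => (z.1 : L)) A1 :=
          (continuous_subtype_val.comp continuous_fst).continuousOn
        exact hbase.congr (fun z hz => hfixX z.1 z.2 hz)
      have hH₀cont : Continuous H₀ :=
        continuous_of_closed_cover hA1cl hA2cl hcov hcont1 hcont2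
      exact contractible_of_deformation
        (show Xm m ⊆ Xm (m+1) by rw [hXsucc]; exact subset_union_left)
        ⟨fun z => ⟨H₀ z, htotal z⟩, hH₀cont.subtype_mk _⟩
        (fun z => Subtype.ext (hzero z)) (fun z => hH1 z)
        (fun z t hz => Subtype.ext (hfixX z t hz))
  have hfinal : (⋃ i, ⋃ j, ⋃ _ : i ≠ j, C i ∩ C j) = Xm k := by
    ext x
    simp only [mem_iUnion]
    rw [hXmem]
    constructor
    · rintro ⟨i, j, hij, hx⟩; exact ⟨i, j, hij, i.isLt, j.isLt, hx⟩
    · rintro ⟨i, j, hij, -, -, hx⟩; exact ⟨i, j, hij, hx⟩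
  rw [hfinal]
  haveI := main k hk le_rfl
  infer_instance
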